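/- If M(1), M(2), ... is a sequence of row stochastic square matrices and there exist constants γ ∈ (0,1] and a positive integer T such that each block product Q(i) = M(iT)···M((i-1)T+1) satisfies λ(Q(i)) ≤ 1 - γ, then δ of the backward product M(t)···M(1) tends to 0 as t → ∞. -/

import Mathlib

open Finset

noncomputable def delta {I : Type*} [Fintype I] [Nonempty I] (A : Matrix I I ℝ) : ℝ :=
  univ.sup' univ_nonempty fun j =>
    univ.sup' univ_nonempty fun i1 =>
      univ.sup' univ_nonempty fun i2 => |A i1 j - A i2 j|

noncomputable def lam {I : Type*} [Fintype I] [Nonempty I] (A : Matrix I I ℝ) : ℝ :=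
  1 - univ.inf' univ_nonempty fun i1 : I =>
        univ.inf' univ_nonempty fun i2 : I => ∑ j, min (A i1 j) (A i2 j)

def RowStochastic {I : Type*} [Fintype I] (A : Matrix I I ℝ) : Prop :=
  (∀ i j, 0 ≤ A i j) ∧ ∀ i, ∑ j, A i j = 1

noncomputable def bprod {I : Type*} [Fintype I] [DecidableEq I]
    (M : ℕ → Matrix I I ℝ) (a b : ℕ) : Matrix I I ℝ :=
  ((List.range (b + 1 - a)).map fun s => M (b - s)).prod

section Aux

variable {I : Type*} [Fintype I] [Nonempty I] [DecidableEq I]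

lemma abs_le_delta (A : Matrix I I ℝ) (i1 i2 j : I) : |A i1 j - A i2 j| ≤ delta A := by
  unfold delta
  calc |A i1 j - A i2 j|
      ≤ univ.sup' univ_nonempty (fun i2 => |A i1 j - A i2 j|) :=
        Finset.le_sup' (fun i2 => |A i1 j - A i2 j|) (mem_univ i2)
    _ ≤ univ.sup' univ_nonempty
          (fun i1 => univ.sup' univ_nonempty fun i2 => |A i1 j - A i2 j|) :=
        Finset.le_sup'
          (fun i1 => univ.sup' univ_nonempty fun i2 => |A i1 j - A i2 j|) (mem_univ i1)
    _ ≤ _ :=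
        Finset.le_sup'
          (fun j => univ.sup' univ_nonempty
            fun i1 => univ.sup' univ_nonempty fun i2 => |A i1 j - A i2 j|) (mem_univ j)

lemma delta_nonneg (A : Matrix I I ℝ) : 0 ≤ delta A := by
  obtain ⟨i⟩ := (inferInstance : Nonempty I)
  have := abs_le_delta A i i i
  simpa using this

lemma sum_min_le_lam (A : Matrix I I ℝ) (i1 i2 : I) :
    1 - ∑ j, min (A i1 j) (A i2 j) ≤ lam A := by
  unfold lam
  have h1 : (univ.inf' univ_nonempty fun i1' : I =>
      univ.inf' univ_nonempty fun i2' : I => ∑ j, min (A i1' j) (A i2' j))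
      ≤ ∑ j, min (A i1 j) (A i2 j) := by
    refine le_trans (Finset.inf'_le _ (mem_univ i1)) ?_
    exact Finset.inf'_le _ (mem_univ i2)
  linarith

lemma lam_le_one {A : Matrix I I ℝ} (hA : RowStochastic A) : lam A ≤ 1 := by
  unfold lam
  have : (0:ℝ) ≤ univ.inf' univ_nonempty fun i1 : I =>
      univ.inf' univ_nonempty fun i2 : I => ∑ j, min (A i1 j) (A i2 j) := by
    refine Finset.le_inf' _ _ fun i1 _ => Finset.le_inf' _ _ fun i2 _ => ?_
    exact Finset.sum_nonneg fun j _ => le_min (hA.1 i1 j) (hA.1 i2 j)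
  linarith

lemma diff_le_lam {A : Matrix I I ℝ} (hA : RowStochastic A) (i1 i2 j : I) :
    A i1 j - A i2 j ≤ lam A := by
  have key : A i1 j - A i2 j ≤ 1 - ∑ k, min (A i1 k) (A i2 k) := by
    have h1 : A i1 j - A i2 j ≤ A i1 j - min (A i1 j) (A i2 j) := by
      have := min_le_right (A i1 j) (A i2 j); linarith
    have h2 : A i1 j - min (A i1 j) (A i2 j) ≤ ∑ k, (A i1 k - min (A i1 k) (A i2 k)) := by
      refine Finset.single_le_sum (f := fun k => A i1 k - min (A i1 k) (A i2 k))
        (fun k _ => ?_) (mem_univ j)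
      exact sub_nonneg.2 (min_le_left _ _)
    have h3 : ∑ k, (A i1 k - min (A i1 k) (A i2 k))
        = 1 - ∑ k, min (A i1 k) (A i2 k) := by
      rw [Finset.sum_sub_distrib, hA.2 i1]
    linarith
  exact key.trans (sum_min_le_lam A i1 i2)

lemma delta_le_lam {A : Matrix I I ℝ} (hA : RowStochastic A) : delta A ≤ lam A := by
  unfold delta
  refine Finset.sup'_le _ _ fun j _ => Finset.sup'_le _ _ fun i1 _ =>
    Finset.sup'_le _ _ fun i2 _ => ?_
  rw [abs_sub_le_iff]
  exact ⟨diff_le_lam hA i1 i2 j, diff_le_lam hA i2 i1 j⟩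

lemma lam_nonneg {A : Matrix I I ℝ} (hA : RowStochastic A) : 0 ≤ lam A := by
  obtain ⟨i⟩ := (inferInstance : Nonempty I)
  have := sum_min_le_lam A i i
  simp only [min_self] at this
  rw [hA.2 i] at this
  linarith

lemma stoch_mul {A B : Matrix I I ℝ} (hA : RowStochastic A) (hB : RowStochastic B) :
    RowStochastic (A * B) := by
  constructor
  · intro i j
    rw [Matrix.mul_apply]
    exact Finset.sum_nonneg fun k _ => mul_nonneg (hA.1 i k) (hB.1 k j)
  · intro i
    simp only [Matrix.mul_apply]
    rw [Finset.sum_comm]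
    have : ∀ k : I, ∑ j, A i k * B k j = A i k := by
      intro k; rw [← Finset.mul_sum, hB.2 k, mul_one]
    simp only [this]
    exact hA.2 i

lemma stoch_one : RowStochastic (1 : Matrix I I ℝ) := by
  constructor
  · intro i j
    by_cases h : i = j <;> simp [Matrix.one_apply, h]
  · intro i
    simp [Matrix.one_apply]

lemma stoch_list_prod (l : List (Matrix I I ℝ)) (h : ∀ A ∈ l, RowStochastic A) :
    RowStochastic l.prod := by
  induction l with
  | nil => simpa using stoch_one
  | cons A t ih =>
    rw [List.prod_cons]
    exact stoch_mul (h A List.mem_cons_self) (ih fun B hB => h B (List.mem_cons_of_mem _ hB))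

lemma stoch_bprod (M : ℕ → Matrix I I ℝ) (hM : ∀ t, RowStochastic (M t)) (a b : ℕ) :
    RowStochastic (bprod M a b) := by
  apply stoch_list_prod
  intro A hA
  simp only [List.mem_map] at hA
  obtain ⟨s, _, rfl⟩ := hA
  exact hM _

/-- Hajnal's inequality: δ(AB) ≤ λ(A) δ(B). -/
lemma delta_mul_le {A B : Matrix I I ℝ} (hA : RowStochastic A) (hB : RowStochastic B) :
    delta (A * B) ≤ lam A * delta B := by
  have core : ∀ i1 i2 j, (A * B) i1 j - (A * B) i2 j ≤ lam A * delta B := by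
    intro i1 i2 j
    obtain ⟨k0, _, hk0⟩ := Finset.exists_mem_eq_inf' (univ_nonempty (α := I)) (fun k => B k j)
    have hmin : ∀ k, B k0 j ≤ B k j := by
      intro k; rw [← hk0]; exact Finset.inf'_le _ (mem_univ k)
    have heq : ∑ k, (A i1 k - A i2 k) * (B k j - B k0 j)
        = (A * B) i1 j - (A * B) i2 j := by
      simp only [sub_mul, mul_sub, Finset.sum_sub_distrib, Matrix.mul_apply, ← Finset.sum_mul,
        hA.2 i1, hA.2 i2]
      ring
    have hterm : ∀ k, (A i1 k - A i2 k) * (B k j - B k0 j)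
        ≤ (A i1 k - min (A i1 k) (A i2 k)) * delta B := by
      intro k
      have h0 : 0 ≤ B k j - B k0 j := by have := hmin k; linarith
      have h1 : (A i1 k - A i2 k) * (B k j - B k0 j)
          ≤ (A i1 k - min (A i1 k) (A i2 k)) * (B k j - B k0 j) := by
        apply mul_le_mul_of_nonneg_right _ h0
        have := min_le_right (A i1 k) (A i2 k); linarith
      refine h1.trans (mul_le_mul_of_nonneg_left ?_ ?_)
      · calc B k j - B k0 j ≤ |B k j - B k0 j| := le_abs_self _
          _ ≤ delta B := abs_le_delta B k k0 j
      · have := min_le_left (A i1 k) (A i2 k); linarith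
    have hsum : ∑ k, (A i1 k - min (A i1 k) (A i2 k))
        = 1 - ∑ k, min (A i1 k) (A i2 k) := by
      rw [Finset.sum_sub_distrib, hA.2 i1]
    calc (A * B) i1 j - (A * B) i2 j
        = ∑ k, (A i1 k - A i2 k) * (B k j - B k0 j) := heq.symm
      _ ≤ ∑ k, (A i1 k - min (A i1 k) (A i2 k)) * delta B :=
          Finset.sum_le_sum fun k _ => hterm k
      _ = (1 - ∑ k, min (A i1 k) (A i2 k)) * delta B := by rw [← Finset.sum_mul, hsum]
      _ ≤ lam A * delta B :=
          mul_le_mul_of_nonneg_right (sum_min_le_lam A i1 i2) (delta_nonneg B)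
  unfold delta
  refine Finset.sup'_le _ _ fun j _ => Finset.sup'_le _ _ fun i1 _ =>
    Finset.sup'_le _ _ fun i2 _ => ?_
  rw [abs_sub_le_iff]
  exact ⟨core i1 i2 j, core i2 i1 j⟩

lemma bprod_split (M : ℕ → Matrix I I ℝ) {a b c : ℕ} (hab : a ≤ b + 1) (hbc : b ≤ c) :
    bprod M a c = bprod M (b + 1) c * bprod M a b := by
  unfold bprod
  rw [← List.prod_append]
  congr 1
  have harith : c + 1 - a = (c - b) + (b + 1 - a) := by omega
  have h1 : c + 1 - (b + 1) = c - b := by omega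
  rw [harith, List.range_add, List.map_append, List.map_map, h1]
  congr 1
  refine List.map_congr_left fun s hs => ?_
  simp only [Function.comp_apply]
  have h2 : c - (c - b + s) = b - s := by omega
  rw [h2]

end Aux

theorem stmt8 {I : Type*} [Fintype I] [Nonempty I] [DecidableEq I] (M : ℕ → Matrix I I ℝ)
    (hM : ∀ t, RowStochastic (M t)) (γ : ℝ) (T : ℕ)
    (hγ0 : 0 < γ) (hγ1 : γ ≤ 1) (hT : 0 < T)
    (hblock : ∀ i : ℕ, 1 ≤ i → lam (bprod M ((i - 1) * T + 1) (i * T)) ≤ 1 - γ) :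
    Filter.Tendsto (fun t => delta (bprod M 1 t)) Filter.atTop (nhds 0) := by
  have hγ1' : (0:ℝ) ≤ 1 - γ := by linarith
  have hγlt : 1 - γ < 1 := by linarith
  have hstoch : ∀ a b, RowStochastic (bprod M a b) := stoch_bprod M hM
  -- delta of block products
  have key : ∀ n : ℕ, delta (bprod M 1 (n * T)) ≤ (1 - γ) ^ n := by
    intro n
    induction n with
    | zero =>
      simp only [Nat.zero_mul, pow_zero]
      exact (delta_le_lam (hstoch 1 0)).trans (lam_le_one (hstoch 1 0))
    | succ n ih =>
      have hsplit : bprod M 1 ((n + 1) * T)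
          = bprod M (n * T + 1) ((n + 1) * T) * bprod M 1 (n * T) := by
        apply bprod_split M (by omega) (by nlinarith)
      rw [hsplit, pow_succ, mul_comm ((1-γ)^n)]
      calc delta (bprod M (n * T + 1) ((n + 1) * T) * bprod M 1 (n * T))
          ≤ lam (bprod M (n * T + 1) ((n + 1) * T)) * delta (bprod M 1 (n * T)) :=
            delta_mul_le (hstoch _ _) (hstoch _ _)
        _ ≤ (1 - γ) * (1 - γ) ^ n := by
            apply mul_le_mul _ ih (delta_nonneg _) hγ1'
            have := hblock (n + 1) (by omega)
            simpa using this
  have bound : ∀ t : ℕ, delta (bprod M 1 t) ≤ (1 - γ) ^ (t / T) := by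
    intro t
    set n := t / T with hn
    have hnt : n * T ≤ t := Nat.div_mul_le_self t T
    have hsplit : bprod M 1 t = bprod M (n * T + 1) t * bprod M 1 (n * T) :=
      bprod_split M (by omega) hnt
    rw [hsplit]
    calc delta (bprod M (n * T + 1) t * bprod M 1 (n * T))
        ≤ lam (bprod M (n * T + 1) t) * delta (bprod M 1 (n * T)) :=
          delta_mul_le (hstoch _ _) (hstoch _ _)
      _ ≤ 1 * (1 - γ) ^ n :=
          mul_le_mul (lam_le_one (hstoch _ _)) (key n) (delta_nonneg _) zero_le_one
      _ = (1 - γ) ^ n := one_mul _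
  have htend : Filter.Tendsto (fun t : ℕ => (1 - γ) ^ (t / T)) Filter.atTop (nhds 0) := by
    have h1 : Filter.Tendsto (fun t : ℕ => t / T) Filter.atTop Filter.atTop := by
      refine Filter.tendsto_atTop_atTop.2 fun b => ⟨b * T, fun t ht => ?_⟩
      exact (Nat.le_div_iff_mul_le hT).2 ht
    exact (tendsto_pow_atTop_nhds_zero_of_lt_one hγ1' hγlt).comp h1
  exact squeeze_zero (fun t => delta_nonneg _) bound htend
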